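/- The identity map id_2 : M_2(ℂ) → M_2(ℂ) is an exposed positive linear map. -/

import Mathlib

open Matrix ComplexOrder

noncomputable section

/-- A linear map between matrix algebras is positive if it sends positive
semidefinite matrices to positive semidefinite matrices. -/
def IsPosMap {m n : ℕ} (φ : Matrix (Fin m) (Fin m) ℂ →ₗ[ℂ] Matrix (Fin n) (Fin n) ℂ) : Prop :=
  ∀ a : Matrix (Fin m) (Fin m) ℂ, a.PosSemidef → (φ a).PosSemidef

/-- A positive linear map `φ` is exposed (generates an exposed ray of the cone of
positive maps) if every positive map `ψ` such that `⟨η, φ(a) η⟩ = 0` implies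
`⟨η, ψ(a) η⟩ = 0` (for `a` positive semidefinite) is a nonnegative multiple of `φ`. -/
def IsExposedMap {m n : ℕ} (φ : Matrix (Fin m) (Fin m) ℂ →ₗ[ℂ] Matrix (Fin n) (Fin n) ℂ) :
    Prop :=
  IsPosMap φ ∧
    ∀ ψ : Matrix (Fin m) (Fin m) ℂ →ₗ[ℂ] Matrix (Fin n) (Fin n) ℂ, IsPosMap ψ →
      (∀ a : Matrix (Fin m) (Fin m) ℂ, a.PosSemidef → ∀ η : Fin n → ℂ,
        star η ⬝ᵥ (φ a) *ᵥ η = 0 → star η ⬝ᵥ (ψ a) *ᵥ η = 0) →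
      ∃ c : ℝ, 0 ≤ c ∧ ψ = (c : ℂ) • φ

/-- The map `Ad_s : x ↦ s* x s`. -/
def adMap {m n : ℕ} (s : Matrix (Fin m) (Fin n) ℂ) :
    Matrix (Fin m) (Fin m) ℂ →ₗ[ℂ] Matrix (Fin n) (Fin n) ℂ where
  toFun x := sᴴ * x * s
  map_add' x y := by simp [Matrix.add_mul, Matrix.mul_add]
  map_smul' c x := by simp [Matrix.smul_mul, Matrix.mul_smul]

/-- The transpose map on matrices, as a linear map. -/
def transposeLM (m : ℕ) : Matrix (Fin m) (Fin m) ℂ →ₗ[ℂ] Matrix (Fin m) (Fin m) ℂ where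
  toFun x := xᵀ
  map_add' x y := Matrix.transpose_add x y
  map_smul' c x := by simp

attribute [-simp] Matrix.empty_vecMulVec Matrix.vecMulVec_empty Matrix.cons_vecMulVec Matrix.vecMulVec_cons


lemma mat2_ext {A B : Matrix (Fin 2) (Fin 2) ℂ} (h00 : A 0 0 = B 0 0) (h01 : A 0 1 = B 0 1)
    (h10 : A 1 0 = B 1 0) (h11 : A 1 1 = B 1 1) : A = B := by
  ext i j
  fin_cases i <;> fin_cases j
  · exact h00
  · exact h01
  · exact h10
  · exact h11

lemma rankOne_psd (ξ : Fin 2 → ℂ) : (vecMulVec ξ (star ξ)).PosSemidef := by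
  refine .of_dotProduct_mulVec_nonneg ?_ ?_
  · ext i j
    simp [conjTranspose_apply, vecMulVec_apply, mul_comm]
  · intro x
    have h : star x ⬝ᵥ (vecMulVec ξ (star ξ)) *ᵥ x
        = star (star ξ ⬝ᵥ x) * (star ξ ⬝ᵥ x) := by
      simp [dotProduct, mulVec, vecMulVec_apply, Fin.sum_univ_two]
      ring
    rw [h]
    exact star_mul_self_nonneg _

lemma keyA (ψ : Matrix (Fin 2) (Fin 2) ℂ →ₗ[ℂ] Matrix (Fin 2) (Fin 2) ℂ)
    (hψ : ∀ a : Matrix (Fin 2) (Fin 2) ℂ, a.PosSemidef → (ψ a).PosSemidef)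
    (hz : ∀ a : Matrix (Fin 2) (Fin 2) ℂ, a.PosSemidef → ∀ η : Fin 2 → ℂ,
      star η ⬝ᵥ a *ᵥ η = 0 → star η ⬝ᵥ (ψ a) *ᵥ η = 0)
    (ξ : Fin 2 → ℂ) :
    ∃ c : ℝ, 0 ≤ c ∧ ψ (vecMulVec ξ (star ξ)) = (c : ℂ) • vecMulVec ξ (star ξ) := by
  set M := ψ (vecMulVec ξ (star ξ)) with hMdef
  have hM : M.PosSemidef := hψ _ (rankOne_psd ξ)
  set η : Fin 2 → ℂ := ![-(starRingEnd ℂ (ξ 1)), starRingEnd ℂ (ξ 0)] with hη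
  have hzero : star η ⬝ᵥ (vecMulVec ξ (star ξ)) *ᵥ η = 0 := by
    simp [dotProduct, mulVec, vecMulVec_apply, Fin.sum_univ_two, hη]
    ring
  have hMη : M *ᵥ η = 0 :=
    (hM.dotProduct_mulVec_zero_iff η).mp (hz _ (rankOne_psd ξ) η hzero)
  have E0 : -(M 0 0) * starRingEnd ℂ (ξ 1) + M 0 1 * starRingEnd ℂ (ξ 0) = 0 := by
    have := congrFun hMη 0
    simpa [mulVec, dotProduct, Fin.sum_univ_two, hη] using this
  have E1 : -(M 1 0) * starRingEnd ℂ (ξ 1) + M 1 1 * starRingEnd ℂ (ξ 0) = 0 := by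
    have := congrFun hMη 1
    simpa [mulVec, dotProduct, Fin.sum_univ_two, hη] using this
  have herm := hM.1
  have h00 : starRingEnd ℂ (M 0 0) = M 0 0 := by
    have := congrFun (congrFun herm 0) 0; simpa [conjTranspose_apply] using this
  have h11 : starRingEnd ℂ (M 1 1) = M 1 1 := by
    have := congrFun (congrFun herm 1) 1; simpa [conjTranspose_apply] using this
  have h10 : starRingEnd ℂ (M 0 1) = M 1 0 := by
    have := congrFun (congrFun herm 1) 0; simpa [conjTranspose_apply] using this
  have h01 : starRingEnd ℂ (M 1 0) = M 0 1 := by rw [← h10]; simp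
  have R0 : -(M 0 0) * (ξ 1) + M 1 0 * (ξ 0) = 0 := by
    have := congrArg (starRingEnd ℂ) E0
    simpa [map_add, _root_.map_mul, map_neg, h00, h10] using this
  have R1 : -(M 0 1) * (ξ 1) + M 1 1 * (ξ 0) = 0 := by
    have := congrArg (starRingEnd ℂ) E1
    simpa [map_add, _root_.map_mul, map_neg, h01, h11] using this
  have hd0 : 0 ≤ M 0 0 := by
    have := hM.dotProduct_mulVec_nonneg ![1, 0]
    simpa [dotProduct, mulVec, Fin.sum_univ_two] using this
  have hd1 : 0 ≤ M 1 1 := by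
    have := hM.dotProduct_mulVec_nonneg ![0, 1]
    simpa [dotProduct, mulVec, Fin.sum_univ_two] using this
  by_cases hA : ξ 0 = 0
  · by_cases hB : ξ 1 = 0
    · refine ⟨0, le_refl 0, ?_⟩
      have hv : vecMulVec ξ (star ξ) = 0 := by
        refine mat2_ext ?_ ?_ ?_ ?_ <;> simp [vecMulVec_apply, hA, hB]
      rw [hMdef, hv]
      simp
    · -- ξ 0 = 0, ξ 1 ≠ 0
      refine ⟨(M 1 1).re / Complex.normSq (ξ 1), div_nonneg (Complex.le_def.mp hd1).1
        (Complex.normSq_nonneg _), ?_⟩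
      have hM11 : ((M 1 1).re : ℂ) = M 1 1 := by
        have him := (Complex.le_def.mp hd1).2
        exact Complex.ext rfl (by simpa using him)
      have hbn : ((Complex.normSq (ξ 1) : ℝ) : ℂ) = ξ 1 * starRingEnd ℂ (ξ 1) := by
        rw [Complex.mul_conj]
      have hbne : ((Complex.normSq (ξ 1) : ℝ) : ℂ) ≠ 0 := by
        simpa [Complex.normSq_eq_zero] using hB
      have hcb : starRingEnd ℂ (ξ 1) ≠ 0 := by simpa using hB
      have hM01 : M 0 1 = 0 := by
        have := R1; rw [hA] at this; simpa [hB] using this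
      have hM00 : M 0 0 = 0 := by
        have := E0; rw [hA] at this; simpa [hcb] using this
      have hM10 : M 1 0 = 0 := by rw [← h10, hM01]; simp
      refine mat2_ext ?_ ?_ ?_ ?_
      · simp [vecMulVec_apply, hA, hM00]
      · simp [vecMulVec_apply, hA, hM01]
      · simp [vecMulVec_apply, hA, hM10]
      · simp only [Matrix.smul_apply, vecMulVec_apply, Pi.star_apply, smul_eq_mul,
          RCLike.star_def, Complex.ofReal_div]
        rw [hM11, hbn]
        field_simp [hbn ▸ hbne]
  · -- ξ 0 ≠ 0
      refine ⟨(M 0 0).re / Complex.normSq (ξ 0), div_nonneg (Complex.le_def.mp hd0).1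
        (Complex.normSq_nonneg _), ?_⟩
      have hM00 : ((M 0 0).re : ℂ) = M 0 0 := by
        have him := (Complex.le_def.mp hd0).2
        exact Complex.ext rfl (by simpa using him)
      have han : ((Complex.normSq (ξ 0) : ℝ) : ℂ) = ξ 0 * starRingEnd ℂ (ξ 0) := by
        rw [Complex.mul_conj]
      have hane : (ξ 0) * starRingEnd ℂ (ξ 0) ≠ 0 := by
        rw [← han]; simpa [Complex.normSq_eq_zero] using hA
      refine mat2_ext ?_ ?_ ?_ ?_ <;>
        simp only [Matrix.smul_apply, vecMulVec_apply, Pi.star_apply, smul_eq_mul,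
          RCLike.star_def, Complex.ofReal_div, hM00, han] <;>
        rw [div_mul_eq_mul_div, eq_div_iff hane]
      · linear_combination (ξ 0) * E0
      · linear_combination (starRingEnd ℂ (ξ 0)) * R0
      · linear_combination (ξ 0) * E1 + (starRingEnd ℂ (ξ 1)) * R0

/-- The identity map on `M_2(ℂ)` generates an exposed ray of the cone of positive
linear maps from `M_2(ℂ)` to `M_2(ℂ)`. -/
theorem id_two_isExposed :
    IsExposedMap (LinearMap.id : Matrix (Fin 2) (Fin 2) ℂ →ₗ[ℂ] Matrix (Fin 2) (Fin 2) ℂ) := by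
  constructor
  · intro a ha
    simpa using ha
  · intro ψ hψ hz
    have hz' : ∀ a : Matrix (Fin 2) (Fin 2) ℂ, a.PosSemidef → ∀ η : Fin 2 → ℂ,
        star η ⬝ᵥ a *ᵥ η = 0 → star η ⬝ᵥ (ψ a) *ᵥ η = 0 := by
      simpa using hz
    obtain ⟨c0, hc0, hP0⟩ := keyA ψ hψ hz' ![(1:ℂ),0]
    obtain ⟨c1, hc1, hP1⟩ := keyA ψ hψ hz' ![(0:ℂ),1]
    obtain ⟨cq, hcq, hQ⟩ := keyA ψ hψ hz' ![(1:ℂ),1]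
    obtain ⟨cr, hcr, hR⟩ := keyA ψ hψ hz' ![(1:ℂ),Complex.I]
    obtain ⟨cw, hcw, hW⟩ := keyA ψ hψ hz' ![(1:ℂ),-1]
    obtain ⟨cs, hcs, hS⟩ := keyA ψ hψ hz' ![(1:ℂ),-Complex.I]
    have hWcomb : vecMulVec ![(1:ℂ),-1] (star ![(1:ℂ),-1]) = (2:ℂ) • (vecMulVec ![(1:ℂ),0] (star ![(1:ℂ),0])) + (2:ℂ) • (vecMulVec ![(0:ℂ),1] (star ![(0:ℂ),1])) - (vecMulVec ![(1:ℂ),1] (star ![(1:ℂ),1])) := by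
      refine mat2_ext ?_ ?_ ?_ ?_ <;> simp [vecMulVec_apply] <;> norm_num
    have hScomb : vecMulVec ![(1:ℂ),-Complex.I] (star ![(1:ℂ),-Complex.I]) = (2:ℂ) • (vecMulVec ![(1:ℂ),0] (star ![(1:ℂ),0])) + (2:ℂ) • (vecMulVec ![(0:ℂ),1] (star ![(0:ℂ),1])) - (vecMulVec ![(1:ℂ),Complex.I] (star ![(1:ℂ),Complex.I])) := by
      refine mat2_ext ?_ ?_ ?_ ?_ <;> simp [vecMulVec_apply] <;> norm_num
    have hψW : (cw:ℂ) • (vecMulVec ![(1:ℂ),-1] (star ![(1:ℂ),-1]))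
        = (2:ℂ) • ((c0:ℂ) • (vecMulVec ![(1:ℂ),0] (star ![(1:ℂ),0]))) + (2:ℂ) • ((c1:ℂ) • (vecMulVec ![(0:ℂ),1] (star ![(0:ℂ),1]))) - (cq:ℂ) • (vecMulVec ![(1:ℂ),1] (star ![(1:ℂ),1])) := by
      rw [← hW, ← hP0, ← hP1, ← hQ, hWcomb]
      simp only [map_sub, map_add, LinearMap.map_smul]
    have hψS : (cs:ℂ) • (vecMulVec ![(1:ℂ),-Complex.I] (star ![(1:ℂ),-Complex.I]))
        = (2:ℂ) • ((c0:ℂ) • (vecMulVec ![(1:ℂ),0] (star ![(1:ℂ),0]))) + (2:ℂ) • ((c1:ℂ) • (vecMulVec ![(0:ℂ),1] (star ![(0:ℂ),1]))) - (cr:ℂ) • (vecMulVec ![(1:ℂ),Complex.I] (star ![(1:ℂ),Complex.I])) := by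
      rw [← hS, ← hP0, ← hP1, ← hR, hScomb]
      simp only [map_sub, map_add, LinearMap.map_smul]
    have ew : cw = cq := by
      have e := congrFun (congrFun hψW 0) 1
      simp [vecMulVec_apply] at e
      exact_mod_cast e
    have eq0 : cq = c0 := by
      have e := congrFun (congrFun hψW 0) 0
      simp [vecMulVec_apply] at e
      rw [ew] at e
      have e' : (cq:ℝ) = 2 * c0 - cq := by exact_mod_cast e
      linarith
    have eq1 : c1 = c0 := by
      have e := congrFun (congrFun hψW 1) 1
      simp [vecMulVec_apply] at e
      rw [ew] at e
      have e' : (cq:ℝ) = 2 * c1 - cq := by exact_mod_cast e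
      linarith
    have es : cs = cr := by
      have e := congrFun (congrFun hψS 0) 1
      simp [vecMulVec_apply] at e
      exact e
    have eq2 : cr = c0 := by
      have e := congrFun (congrFun hψS 0) 0
      simp [vecMulVec_apply] at e
      rw [es] at e
      have e' : (cr:ℝ) = 2 * c0 - cr := by exact_mod_cast e
      linarith
    -- rewrite the coefficients
    rw [show ((c1:ℂ)) = (c0:ℂ) by exact_mod_cast eq1] at hP1
    rw [show ((cq:ℂ)) = (c0:ℂ) by exact_mod_cast eq0] at hQ
    rw [show ((cr:ℂ)) = (c0:ℂ) by exact_mod_cast eq2] at hR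
    -- values on elementary matrices
    have hdec01 : (!![0,1;0,0] : Matrix (Fin 2) (Fin 2) ℂ)
        = (1/2:ℂ) • ((vecMulVec ![(1:ℂ),1] (star ![(1:ℂ),1])) - (vecMulVec ![(1:ℂ),0] (star ![(1:ℂ),0])) - (vecMulVec ![(0:ℂ),1] (star ![(0:ℂ),1])))
          + (Complex.I/2) • ((vecMulVec ![(1:ℂ),Complex.I] (star ![(1:ℂ),Complex.I])) - (vecMulVec ![(1:ℂ),0] (star ![(1:ℂ),0])) - (vecMulVec ![(0:ℂ),1] (star ![(0:ℂ),1]))) := by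
      refine mat2_ext ?_ ?_ ?_ ?_ <;>
        simp [vecMulVec_apply] <;> ring_nf <;> simp [Complex.I_sq] <;> ring
    have hdec10 : (!![0,0;1,0] : Matrix (Fin 2) (Fin 2) ℂ)
        = (1/2:ℂ) • ((vecMulVec ![(1:ℂ),1] (star ![(1:ℂ),1])) - (vecMulVec ![(1:ℂ),0] (star ![(1:ℂ),0])) - (vecMulVec ![(0:ℂ),1] (star ![(0:ℂ),1])))
          - (Complex.I/2) • ((vecMulVec ![(1:ℂ),Complex.I] (star ![(1:ℂ),Complex.I])) - (vecMulVec ![(1:ℂ),0] (star ![(1:ℂ),0])) - (vecMulVec ![(0:ℂ),1] (star ![(0:ℂ),1]))) := by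
      refine mat2_ext ?_ ?_ ?_ ?_ <;>
        simp [vecMulVec_apply] <;> ring_nf <;> simp [Complex.I_sq] <;> ring
    have hE01 : ψ !![0,1;0,0] = (c0:ℂ) • (!![0,1;0,0] : Matrix (Fin 2) (Fin 2) ℂ) := by
      conv_lhs => rw [hdec01]
      conv_rhs => rw [hdec01]
      simp only [map_add, map_sub, LinearMap.map_smul, hQ, hR, hP0, hP1]
      module
    have hE10 : ψ !![0,0;1,0] = (c0:ℂ) • (!![0,0;1,0] : Matrix (Fin 2) (Fin 2) ℂ) := by
      conv_lhs => rw [hdec10]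
      conv_rhs => rw [hdec10]
      simp only [map_add, map_sub, LinearMap.map_smul, hQ, hR, hP0, hP1]
      module
    have hE00 : ψ !![1,0;0,0] = (c0:ℂ) • (!![1,0;0,0] : Matrix (Fin 2) (Fin 2) ℂ) := by
      have h : (!![1,0;0,0] : Matrix (Fin 2) (Fin 2) ℂ) = vecMulVec ![(1:ℂ),0] (star ![(1:ℂ),0]) := by
        refine mat2_ext ?_ ?_ ?_ ?_ <;> simp [vecMulVec_apply]
      rw [h, hP0]
    have hE11 : ψ !![0,0;0,1] = (c0:ℂ) • (!![0,0;0,1] : Matrix (Fin 2) (Fin 2) ℂ) := by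
      have h : (!![0,0;0,1] : Matrix (Fin 2) (Fin 2) ℂ) = vecMulVec ![(0:ℂ),1] (star ![(0:ℂ),1]) := by
        refine mat2_ext ?_ ?_ ?_ ?_ <;> simp [vecMulVec_apply]
      rw [h, hP1]
    refine ⟨c0, hc0, ?_⟩
    ext x : 1
    have hx : x = x 0 0 • !![1,0;0,0] + x 0 1 • !![0,1;0,0]
        + x 1 0 • !![0,0;1,0] + x 1 1 • !![0,0;0,1] := by
      refine mat2_ext ?_ ?_ ?_ ?_ <;> simp
    show ψ x = ((c0:ℂ) • (LinearMap.id : Matrix (Fin 2) (Fin 2) ℂ →ₗ[ℂ] Matrix (Fin 2) (Fin 2) ℂ)) x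
    have : ((c0:ℂ) • (LinearMap.id : Matrix (Fin 2) (Fin 2) ℂ →ₗ[ℂ] Matrix (Fin 2) (Fin 2) ℂ)) x
        = (c0:ℂ) • x := rfl
    rw [this]
    conv_lhs => rw [hx]
    conv_rhs => rw [hx]
    simp only [map_add, LinearMap.map_smul, hE00, hE01, hE10, hE11]
    module


end
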